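/- Under the structural assumptions on A (A = -BBᵗ - V⁻¹M, V positive diagonal, M symmetric irreducible with positive diagonal, nonpositive off-diagonal, zero row sums), the submatrix Ã = (Aᵢⱼ)_{2≤i,j≤n} is diagonalizable over ℝ and all of its eigenvalues are real and strictly negative. -/

import Mathlib

open Matrix

/-- under the structural assumptions, the submatrix Ã (deleting the
first row and column of A) is diagonalizable over ℝ with strictly negative
eigenvalues. -/
theorem mrmt_stmt4 {n : ℕ} (v : Fin (n + 1) → ℝ)
    (M A : Matrix (Fin (n + 1)) (Fin (n + 1)) ℝ) (B : Fin (n + 1) → ℝ)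
    (hB : B = Pi.single 0 1)
    (hv : ∀ i, 0 < v i)
    (hMsym : M.IsSymm)
    (hMirr : ∀ i j : Fin (n + 1), i ≠ j → Relation.TransGen (fun a b => M a b ≠ 0) i j)
    (hMdiag : ∀ i, 0 < M i i)
    (hMoff : ∀ i j, i ≠ j → M i j ≤ 0)
    (hMrow : ∀ i, ∑ j, M i j = 0)
    (hA : A = -(vecMulVec B B) - (Matrix.diagonal v)⁻¹ * M) :
    ∃ (P : Matrix (Fin n) (Fin n) ℝ) (d : Fin n → ℝ),
      IsUnit P.det ∧
      P⁻¹ * (A.submatrix Fin.succ Fin.succ) * P = Matrix.diagonal d ∧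
      ∀ i, d i < 0 := by
  classical
  have hMji : ∀ i j, M j i = M i j := fun i j => by
    have := congrFun (congrFun hMsym i) j
    simpa [Matrix.transpose_apply] using this
  have colsum : ∀ j, ∑ i, M i j = 0 := fun j => by
    rw [show (∑ i, M i j) = ∑ i, M j i from Finset.sum_congr rfl fun i _ => hMji j i]
    exact hMrow j
  -- quadratic form identity
  have key : ∀ x : Fin (n + 1) → ℝ,
      ∑ i, ∑ j, M i j * (x i - x j) ^ 2 = -(2 * ∑ i, ∑ j, M i j * x i * x j) := by
    intro x
    have h1 : ∀ i, ∑ j, M i j * (x i - x j) ^ 2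
        = (∑ j, M i j) * x i ^ 2 - 2 * ∑ j, M i j * x i * x j + ∑ j, M i j * x j ^ 2 := by
      intro i
      rw [Finset.sum_mul, Finset.mul_sum, ← Finset.sum_sub_distrib, ← Finset.sum_add_distrib]
      exact Finset.sum_congr rfl fun j _ => by ring
    have h2 : ∑ i, ∑ j, M i j * x j ^ 2 = 0 := by
      rw [Finset.sum_comm]
      refine Finset.sum_eq_zero fun j _ => ?_
      rw [← Finset.sum_mul, colsum j, zero_mul]
    calc ∑ i, ∑ j, M i j * (x i - x j) ^ 2
        = ∑ i, ((∑ j, M i j) * x i ^ 2 - 2 * ∑ j, M i j * x i * x j + ∑ j, M i j * x j ^ 2) :=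
          Finset.sum_congr rfl fun i _ => h1 i
      _ = ∑ i, (-(2 * ∑ j, M i j * x i * x j) + ∑ j, M i j * x j ^ 2) := by
          refine Finset.sum_congr rfl fun i _ => ?_
          rw [hMrow i]; ring
      _ = -(2 * ∑ i, ∑ j, M i j * x i * x j) + ∑ i, ∑ j, M i j * x j ^ 2 := by
          rw [Finset.sum_add_distrib]
          congr 1
          rw [Finset.mul_sum, ← Finset.sum_neg_distrib]
      _ = -(2 * ∑ i, ∑ j, M i j * x i * x j) := by rw [h2, add_zero]
  -- each summand of the squared-difference sum is nonpositive
  have term_nonpos : ∀ (x : Fin (n + 1) → ℝ) i j, M i j * (x i - x j) ^ 2 ≤ 0 := by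
    intro x i j
    rcases eq_or_ne i j with rfl | h
    · simp
    · exact mul_nonpos_of_nonpos_of_nonneg (hMoff i j h) (sq_nonneg _)
  -- the quadratic form is nonnegative
  have Qnonneg : ∀ x : Fin (n + 1) → ℝ, 0 ≤ ∑ i, ∑ j, M i j * x i * x j := by
    intro x
    have hS : ∑ i, ∑ j, M i j * (x i - x j) ^ 2 ≤ 0 :=
      Finset.sum_nonpos fun i _ => Finset.sum_nonpos fun j _ => term_nonpos x i j
    nlinarith [key x]
  set Mt : Matrix (Fin n) (Fin n) ℝ := M.submatrix Fin.succ Fin.succ with hMtdef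
  -- Mt is positive definite
  have hMtPD : Mt.PosDef := by
    rw [Matrix.posDef_iff_dotProduct_mulVec]
    constructor
    · ext i j
      simp [Matrix.conjTranspose_apply, hMtdef, Matrix.submatrix_apply, hMji]
    · intro x hx
      set y : Fin (n + 1) → ℝ := Fin.cons 0 x with hy
      have hsplit : ∑ i, ∑ j, M i j * y i * y j
          = ∑ j, M 0 j * y 0 * y j
            + ∑ i : Fin n, (M i.succ 0 * y i.succ * y 0
              + ∑ j : Fin n, M i.succ j.succ * y i.succ * y j.succ) := by
        rw [Fin.sum_univ_succ]
        congr 1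
        refine Finset.sum_congr rfl fun i _ => ?_
        rw [Fin.sum_univ_succ]
      have hdp : dotProduct (star x) (Mt *ᵥ x) = ∑ i, ∑ j, M i j * y i * y j := by
        rw [hsplit]
        simp only [hy, Fin.cons_zero, Fin.cons_succ, mul_zero, zero_mul, add_zero, zero_add,
          Finset.sum_const_zero]
        simp only [dotProduct, Matrix.mulVec, dotProduct, star_trivial, hMtdef,
          Matrix.submatrix_apply, Finset.mul_sum]
        exact Finset.sum_congr rfl fun i _ => Finset.sum_congr rfl fun j _ => by ring
      have hQnn := Qnonneg y
      have hQne : ∑ i, ∑ j, M i j * y i * y j ≠ 0 := by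
        intro h0
        have hSsum : ∑ i, ∑ j, M i j * (y i - y j) ^ 2 = 0 := by rw [key y, h0]; ring
        have hterm : ∀ i j, M i j * (y i - y j) ^ 2 = 0 := by
          have houter := (Finset.sum_eq_zero_iff_of_nonpos
            (fun i _ => Finset.sum_nonpos fun j _ => term_nonpos y i j)).1 hSsum
          intro i j
          exact (Finset.sum_eq_zero_iff_of_nonpos
            (fun j _ => term_nonpos y i j)).1 (houter i (Finset.mem_univ i)) j
            (Finset.mem_univ j)
        have step : ∀ a b : Fin (n + 1), M a b ≠ 0 → y a = y b := by
          intro a b hab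
          rcases eq_or_ne a b with rfl | h
          · rfl
          · have h1 := hterm a b
            have h2 : (y a - y b) ^ 2 = 0 := by
              rcases mul_eq_zero.1 h1 with h' | h'
              · exact absurd h' hab
              · exact h'
            have h3 := pow_eq_zero_iff (n := 2) (by norm_num) |>.1 h2
            exact sub_eq_zero.1 h3
        have hconst : ∀ a b : Fin (n + 1),
            Relation.TransGen (fun a b => M a b ≠ 0) a b → y a = y b := by
          intro a b h
          induction h with
          | single h' => exact step _ _ h'
          | tail _ h' ih => exact ih.trans (step _ _ h')
        obtain ⟨i, hi⟩ := Function.ne_iff.1 hx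
        have hyi : y i.succ = y 0 := hconst _ _ (hMirr i.succ 0 (Fin.succ_ne_zero i))
        rw [hy] at hyi
        simp only [Fin.cons_succ, Fin.cons_zero] at hyi
        exact hi hyi
      rw [hdp]
      exact lt_of_le_of_ne hQnn (Ne.symm hQne)
  -- setup the diagonal scaling
  set w : Fin n → ℝ := fun i => Real.sqrt ((v i.succ)⁻¹) with hwdef
  have hw : ∀ i, 0 < w i := fun i => Real.sqrt_pos.2 (inv_pos.2 (hv _))
  set S : Matrix (Fin n) (Fin n) ℝ := Matrix.diagonal w with hSdef
  have hSS : S * S = Matrix.diagonal fun i => (v i.succ)⁻¹ := by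
    rw [hSdef, Matrix.diagonal_mul_diagonal]
    rw [show (fun i => w i * w i) = fun i => (v i.succ)⁻¹ from
      funext fun i => Real.mul_self_sqrt (le_of_lt (inv_pos.2 (hv _)))]
  -- inverse of the diagonal matrix
  have hdinv : (Matrix.diagonal v)⁻¹ = Matrix.diagonal fun k => (v k)⁻¹ := by
    apply Matrix.inv_eq_right_inv
    rw [Matrix.diagonal_mul_diagonal]
    rw [show (fun k => v k * (v k)⁻¹) = fun _ => (1 : ℝ) from
      funext fun k => mul_inv_cancel₀ (hv k).ne']
    exact Matrix.diagonal_one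
  -- rewrite the submatrix
  have hAsub : A.submatrix Fin.succ Fin.succ = -(S * S * Mt) := by
    rw [hSS]
    ext i j
    rw [hA]
    simp only [Matrix.submatrix_apply, Matrix.sub_apply, Matrix.neg_apply,
      Matrix.vecMulVec_apply, hB, hdinv, Matrix.diagonal_mul, hMtdef]
    rw [Pi.single_eq_of_ne (Fin.succ_ne_zero i)]
    ring
  -- the symmetrized matrix S * Mt * S is positive definite
  have hSherm : S.conjTranspose = S := by
    rw [hSdef, Matrix.diagonal_conjTranspose]
    congr 1
  have hNPD : (S * Mt * S).PosDef := by
    rw [Matrix.posDef_iff_dotProduct_mulVec]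
    constructor
    · have := Matrix.isHermitian_conjTranspose_mul_mul S hMtPD.1
      rwa [hSherm] at this
    · intro x hx
      have hvec : (S * Mt * S) *ᵥ x = S *ᵥ (Mt *ᵥ (S *ᵥ x)) := by
        rw [← Matrix.mulVec_mulVec, ← Matrix.mulVec_mulVec]
      have hSx : S *ᵥ x ≠ 0 := by
        intro h0
        apply hx
        funext i
        have h1 := congrFun h0 i
        rw [hSdef, Matrix.mulVec_diagonal] at h1
        have := (mul_eq_zero.1 h1).resolve_left (hw i).ne'
        simpa using this
      have hdot : dotProduct (star x) ((S * Mt * S) *ᵥ x)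
          = dotProduct (star (S *ᵥ x)) (Mt *ᵥ (S *ᵥ x)) := by
        rw [hvec]
        simp only [star_trivial, dotProduct, hSdef, Matrix.mulVec_diagonal]
        exact Finset.sum_congr rfl fun i _ => by ring
      rw [hdot]
      exact hMtPD.dotProduct_mulVec_pos hSx
  have hNh : (S * Mt * S).IsHermitian := hNPD.1
  set μ : Fin n → ℝ := hNh.eigenvalues with hμdef
  have hμpos : ∀ i, 0 < μ i := fun i => hNPD.eigenvalues_pos i
  set U : Matrix (Fin n) (Fin n) ℝ := (hNh.eigenvectorUnitary : Matrix (Fin n) (Fin n) ℝ)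
    with hUdef
  have hspec : S * Mt * S = U * Matrix.diagonal μ * star U := by
    have hsp := hNh.spectral_theorem
    rwa [show (RCLike.ofReal ∘ hNh.eigenvalues : Fin n → ℝ) = μ from by
      funext i; simp [RCLike.ofReal_real_eq_id, hμdef]] at hsp
  have hUU : star U * U = 1 := (Matrix.mem_unitaryGroup_iff').mp hNh.eigenvectorUnitary.2
  have hUU' : U * star U = 1 := (Matrix.mem_unitaryGroup_iff).mp hNh.eigenvectorUnitary.2
  set P : Matrix (Fin n) (Fin n) ℝ := S * U with hPdef
  set d : Fin n → ℝ := fun i => -μ i with hddef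
  have hPdet : IsUnit P.det := by
    rw [hPdef, Matrix.det_mul]
    refine IsUnit.mul ?_ ?_
    · rw [hSdef, Matrix.det_diagonal]
      exact (Finset.prod_pos fun i _ => hw i).ne'.isUnit
    · have hdet1 : U.det * (star U).det = 1 := by rw [← Matrix.det_mul, hUU', Matrix.det_one]
      exact IsUnit.of_mul_eq_one _ hdet1
  have hdiagd : Matrix.diagonal d = -(Matrix.diagonal μ) := by
    rw [hddef, ← Matrix.diagonal_neg]
  have hstep : (A.submatrix Fin.succ Fin.succ) * P = P * Matrix.diagonal d := by
    rw [hAsub, hdiagd, hPdef]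
    calc -(S * S * Mt) * (S * U)
        = -(S * (S * Mt * S) * U) := by noncomm_ring
      _ = -(S * (U * Matrix.diagonal μ * star U) * U) := by rw [hspec]
      _ = -(S * U * Matrix.diagonal μ * (star U * U)) := by noncomm_ring
      _ = S * U * -(Matrix.diagonal μ) := by rw [hUU]; noncomm_ring
  refine ⟨P, d, hPdet, ?_, fun i => neg_lt_zero.2 (hμpos i)⟩
  rw [Matrix.mul_assoc, hstep, ← Matrix.mul_assoc, Matrix.nonsing_inv_mul P hPdet, Matrix.one_mul]
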